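/- Let K be a field of characteristic zero with a derivation ∂ : K → K, let t ∈ K satisfy ∂t = 1, and let α ∈ K be a constant (∂α = 0). If z ∈ K is a solution of the second Painlevé equation P_II(α), i.e. ∂(∂z) = 2z³ + t·z + α, and if ∂z - z² - t/2 ≠ 0, then w = -z + (α - 1/2)/(∂z - z² - t/2) is a solution of P_II(α - 1), i.e. ∂(∂w) = 2w³ + t·w + (α - 1). -/

import Mathlib

/-- The Bäcklund transformation `T₋` sends solutions of `P_II(α)`
to solutions of `P_II(α - 1)`. -/
theorem PII_backlund_Tminus {K : Type*} [Field K] [CharZero K]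
    (D : Derivation ℚ K K) (t α z : K)
    (ht : D t = 1) (hα : D α = 0)
    (hz : D (D z) = 2 * z ^ 3 + t * z + α)
    (hden : D z - z ^ 2 - t / 2 ≠ 0) :
    D (D (-z + (α - 1 / 2) / (D z - z ^ 2 - t / 2))) =
      2 * (-z + (α - 1 / 2) / (D z - z ^ 2 - t / 2)) ^ 3 +
        t * (-z + (α - 1 / 2) / (D z - z ^ 2 - t / 2)) + (α - 1) := by
  have h2 : D ((2:K)) = 0 := by
    have := D.map_natCast (2:ℕ); simpa using this
  have hhalf : D ((1:K)/2) = 0 := by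
    rw [D.leibniz_div, h2, D.map_one_eq_zero]; simp
  set c : K := α - 1/2 with hc
  set u : K := D z - z ^ 2 - t / 2 with hu
  have hDc : D c = 0 := by
    rw [hc, map_sub, hα, hhalf, sub_zero]
  have hDu : D u = -(2*z*u) + c := by
    rw [hu, map_sub, map_sub, hz, D.leibniz_pow]
    have hdt : D (t/2) = 1/2 := by
      rw [div_eq_mul_inv, D.leibniz, D.leibniz_inv, h2, ht]
      simp [one_div]
    rw [hdt, hc]
    simp only [smul_eq_mul, Nat.cast_ofNat, pow_one]
    ring
  have hv : D z = u + z^2 + t/2 := by rw [hu]; ring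
  have hDw : D (-z + c / u) = -(u + z^2 + t/2) + (2*z*c*u - c^2)/u^2 := by
    rw [map_add, D.map_neg, D.leibniz_div, hDc, hDu, hv]
    simp only [smul_eq_mul]
    field_simp
    ring
  rw [hDw]
  simp only [map_add, map_sub, Derivation.map_neg, D.leibniz_div, D.leibniz_pow,
    Derivation.leibniz, hDc, hDu, ht, h2, hz, smul_eq_mul]
  rw [hv]
  have hαc : α = c + 1/2 := by rw [hc]; ring
  rw [hαc]
  field_simp
  ring
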